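/- The Tutte polynomial of the Catalan matroid equals the generating function of Dyck paths by the statistics a and b: as polynomials in ℤ[q,t], Σ_{A ⊆ {1,…,2n}} (q−1)^{r({1,…,2n}) − r(A)} (t−1)^{|A| − r(A)} = Σ_{P Dyck path of length 2n} q^{a(P)} t^{b(P)}, where r denotes the rank function of C_n. -/
import Mathlib


/-- Height of the path with up-step set `A` after `x` steps: `2·|A ∩ {1,…,x}| − x`. -/
def ht (A : Finset ℕ) (x : ℕ) : ℤ := 2 * (A ∩ Finset.Icc 1 x).card - x

/-- `P` is the up-step set of a Dyck path of length `2n`. -/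
def IsDyck (n : ℕ) (P : Finset ℕ) : Prop :=
  P ⊆ Finset.Icc 1 (2 * n) ∧ P.card = n ∧ ∀ x ≤ 2 * n, 0 ≤ ht P x

open MvPolynomial

/-- The rank of `A` in the Catalan matroid: the maximum of `|A ∩ B|` over bases `B`. -/
noncomputable def catalanRank (n : ℕ) (A : Finset ℕ) : ℕ :=
  sSup {m : ℕ | ∃ B : Finset ℕ, IsDyck n B ∧ (A ∩ B).card = m}

/-- `a(P)`: the number of up-steps `P` takes before its first down-step, i.e. the
largest `k ≥ 0` with `{1,…,k} ⊆ P`. -/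
noncomputable def statA (P : Finset ℕ) : ℕ :=
  sSup {k : ℕ | Finset.Icc 1 k ⊆ P}

/-- `b(P)`: the number of `x ∈ {1,…,2n}` with `ht_P(x) = 0`. -/
def statB (n : ℕ) (P : Finset ℕ) : ℕ :=
  ((Finset.Icc 1 (2 * n)).filter (fun x => ht P x = 0)).card

namespace CatalanTutte

variable {n x k m : ℕ} {A B P : Finset ℕ}

lemma ht_zero (P : Finset ℕ) : ht P 0 = 0 := by simp [ht]

lemma card_succ (P : Finset ℕ) (x : ℕ) :
    (P ∩ Finset.Icc 1 (x+1)).card =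
      (P ∩ Finset.Icc 1 x).card + (if x+1 ∈ P then 1 else 0) := by
  have h : Finset.Icc 1 (x+1) = insert (x+1) (Finset.Icc 1 x) := by
    ext y; simp [Finset.mem_Icc]; omega
  rw [h]
  by_cases hx : x+1 ∈ P
  · rw [Finset.inter_insert_of_mem hx,
      Finset.card_insert_of_notMem (by simp [Finset.mem_Icc]), if_pos hx]
  · rw [Finset.inter_insert_of_notMem hx, if_neg hx, add_zero]

lemma ht_succ (P : Finset ℕ) (x : ℕ) :
    ht P (x+1) = ht P x + (if x+1 ∈ P then 1 else -1) := by
  unfold ht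
  rw [card_succ]
  split_ifs <;> push_cast <;> ring

lemma ht_le (P : Finset ℕ) (x : ℕ) : ht P x ≤ x := by
  have h : (P ∩ Finset.Icc 1 x).card ≤ x := by
    refine le_trans (Finset.card_le_card Finset.inter_subset_right) ?_
    simp
  unfold ht; omega

lemma ht_of_Icc_subset (h : Finset.Icc 1 x ⊆ P) : ht P x = x := by
  unfold ht
  rw [Finset.inter_eq_right.mpr h]
  have : (Finset.Icc 1 x).card = x := by simp
  omega

lemma ht_pred (P : Finset ℕ) (x : ℕ) (h : ht P (x+1) = ((x+1 : ℕ) : ℤ)) :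
    ht P x = x := by
  have hs := ht_succ P x
  have hle := ht_le P x
  split_ifs at hs <;> omega

lemma ht_eq_all : ∀ x, ht P x = x → ∀ y ≤ x, ht P y = y := by
  intro x
  induction x with
  | zero => intro h y hy; interval_cases y; exact h
  | succ k ih =>
    intro h y hy
    rcases Nat.lt_succ_iff_lt_or_eq.mp (Nat.lt_succ_of_le hy) with h' | h'
    · exact ih (ht_pred P k h) y (by omega)
    · subst h'; exact h

lemma Icc_subset_of_ht (h : ht P x = x) : Finset.Icc 1 x ⊆ P := by
  intro y hy; rw [Finset.mem_Icc] at hy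
  have h1 : ht P y = y := ht_eq_all _ h y hy.2
  have h2 : ht P (y-1) = ((y-1 : ℕ) : ℤ) := ht_eq_all _ h (y-1) (by omega)
  have hs := ht_succ P (y-1)
  rw [show (y-1)+1 = y by omega] at hs
  split_ifs at hs with hmem
  · exact hmem
  · exfalso; omega

/-- Height profile of the canonical path, computed right-to-left:
`GH n A k` is the height at position `2n - k`. -/
def GH (n : ℕ) (A : Finset ℕ) : ℕ → ℕ
  | 0 => 0
  | k+1 =>
    if GH n A k = 2*n - k then 2*n - k - 1
    else if 2*n - k ∈ A ∧ 0 < GH n A k then GH n A k - 1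
    else GH n A k + 1

def HT (n : ℕ) (A : Finset ℕ) (x : ℕ) : ℕ := GH n A (2*n - x)

lemma HT_step (hx1 : 1 ≤ x) (hx2 : x ≤ 2*n) :
    HT n A (x-1) = if HT n A x = x then x - 1
      else if x ∈ A ∧ 0 < HT n A x then HT n A x - 1 else HT n A x + 1 := by
  unfold HT
  rw [show 2*n - (x-1) = (2*n - x) + 1 by omega, GH,
    show 2*n - (2*n - x) = x by omega]

lemma GH_le : ∀ k, k ≤ 2*n → GH n A k ≤ 2*n - k ∧ GH n A k % 2 = (2*n - k) % 2 := by
  intro k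
  induction k with
  | zero => simp [GH]
  | succ k ih =>
    intro hk
    have ih' := ih (by omega)
    rw [GH]
    split_ifs with h1 h2 <;> omega

lemma HT_le (hx : x ≤ 2*n) : HT n A x ≤ x ∧ HT n A x % 2 = x % 2 := by
  have h := GH_le (n := n) (A := A) (2*n - x) (by omega)
  unfold HT
  rw [show 2*n - (2*n - x) = x by omega] at h
  exact h

lemma HT_bot : HT n A 0 = 0 := Nat.le_zero.mp (HT_le (by omega)).1

lemma HT_top : HT n A (2*n) = 0 := by unfold HT; simp [GH]

lemma HT_diff (hx1 : 1 ≤ x) (hx2 : x ≤ 2*n) :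
    HT n A (x-1) + 1 = HT n A x ∨ HT n A (x-1) = HT n A x + 1 := by
  have h := HT_step (n := n) (A := A) hx1 hx2
  have h2 := HT_le (n := n) (A := A) hx2
  split_ifs at h <;> omega

lemma HT_pred (hx : x+1 ≤ 2*n) (h : HT n A (x+1) = x+1) : HT n A x = x := by
  have hstep := HT_step (n := n) (A := A) (x := x+1) (by omega) hx
  rw [if_pos h] at hstep
  simpa using hstep

lemma HT_eq_all : ∀ x, x ≤ 2*n → HT n A x = x → ∀ y ≤ x, HT n A y = y := by
  intro x
  induction x with
  | zero => intro _ h y hy; interval_cases y; exact h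
  | succ k ih =>
    intro hk h y hy
    rcases Nat.lt_succ_iff_lt_or_eq.mp (Nat.lt_succ_of_le hy) with h' | h'
    · exact ih (by omega) (HT_pred hk h) y (by omega)
    · subst h'; exact h

def pathOf (n : ℕ) (A : Finset ℕ) : Finset ℕ :=
  (Finset.Icc 1 (2*n)).filter (fun x => HT n A (x-1) < HT n A x)

lemma pathOf_subset : pathOf n A ⊆ Finset.Icc 1 (2*n) := Finset.filter_subset _ _

lemma mem_pathOf : x ∈ pathOf n A ↔ (1 ≤ x ∧ x ≤ 2*n) ∧ HT n A (x-1) < HT n A x := by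
  unfold pathOf; rw [Finset.mem_filter, Finset.mem_Icc]

lemma ht_pathOf (hx : x ≤ 2*n) : ht (pathOf n A) x = (HT n A x : ℤ) := by
  induction x with
  | zero => rw [ht_zero, HT_bot]; simp
  | succ k ih =>
    have ihk := ih (by omega)
    have hs := ht_succ (pathOf n A) k
    have hd := HT_diff (n := n) (A := A) (x := k+1) (by omega) hx
    simp only [Nat.add_sub_cancel] at hd
    by_cases hm : k+1 ∈ pathOf n A
    · have hlt : HT n A k < HT n A (k+1) := by
        have := mem_pathOf.mp hm; simpa using this.2
      rw [if_pos hm] at hs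
      omega
    · have hge : ¬ HT n A k < HT n A (k+1) := by
        intro h
        exact hm (mem_pathOf.mpr ⟨⟨by omega, hx⟩, by simpa using h⟩)
      rw [if_neg hm] at hs
      omega

lemma pathOf_isDyck : IsDyck n (pathOf n A) := by
  refine ⟨pathOf_subset, ?_, ?_⟩
  · have h := ht_pathOf (n := n) (A := A) (x := 2*n) le_rfl
    rw [HT_top] at h
    unfold ht at h
    rw [Finset.inter_eq_left.mpr pathOf_subset] at h
    omega
  · intro x hx
    rw [ht_pathOf hx]
    positivity

lemma statA_bdd (hP : P ⊆ Finset.Icc 1 (2*n)) (hn : 0 < n) :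
    BddAbove {k : ℕ | Finset.Icc 1 k ⊆ P} := by
  refine ⟨2*n, fun k hk => ?_⟩
  rcases Nat.eq_zero_or_pos k with h | h
  · omega
  · have hm : k ∈ Finset.Icc 1 k := by rw [Finset.mem_Icc]; omega
    have := hP (hk hm)
    rw [Finset.mem_Icc] at this
    omega

lemma statA_spec (hP : P ⊆ Finset.Icc 1 (2*n)) (hn : 0 < n) :
    Finset.Icc 1 (statA P) ⊆ P := by
  have hne : Set.Nonempty {k : ℕ | Finset.Icc 1 k ⊆ P} := ⟨0, by simp⟩
  exact Nat.sSup_mem hne (statA_bdd hP hn)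

lemma le_statA (hP : P ⊆ Finset.Icc 1 (2*n)) (hn : 0 < n)
    (h : Finset.Icc 1 k ⊆ P) : k ≤ statA P :=
  le_csSup (statA_bdd hP hn) h

def ZP (n : ℕ) (P : Finset ℕ) : Finset ℕ :=
  (Finset.Icc 1 (2*n)).filter (fun x => ht P x = 0)

lemma ZP_subset : ZP n P ⊆ Finset.Icc 1 (2*n) := Finset.filter_subset _ _

lemma mem_ZP : x ∈ ZP n P ↔ (1 ≤ x ∧ x ≤ 2*n) ∧ ht P x = 0 := by
  unfold ZP; rw [Finset.mem_filter, Finset.mem_Icc]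

lemma ZP_notMem (hP : IsDyck n P) (h : x ∈ ZP n P) : x ∉ P := by
  intro hxP
  rw [mem_ZP] at h
  have hs := ht_succ P (x-1)
  rw [show x-1+1 = x by omega, if_pos hxP] at hs
  have h0 := hP.2.2 (x-1) (by omega)
  omega

lemma ht_eq_HT_of_interval (hn : 0 < n) (hP : IsDyck n P)
    (h1 : P \ Finset.Icc 1 (statA P) ⊆ A) (h2 : A \ P ⊆ ZP n P) :
    ∀ k, k ≤ 2*n → ht P (2*n - k) = (HT n A (2*n - k) : ℤ) := by
  obtain ⟨hPs, hPc, hPh⟩ := hP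
  intro k
  induction k with
  | zero =>
    intro _
    rw [Nat.sub_zero, HT_top]
    unfold ht
    rw [Finset.inter_eq_left.mpr hPs]
    omega
  | succ k ih =>
    intro hk
    have ihx := ih (by omega)
    have hx1 : 1 ≤ 2*n - k := by omega
    have hx2 : 2*n - k ≤ 2*n := by omega
    set x := 2*n - k with hxdef
    have hstep := HT_step (n := n) (A := A) hx1 hx2
    have hle := HT_le (n := n) (A := A) hx2
    have hgoal : 2*n - (k+1) = x - 1 := by omega
    rw [hgoal, hstep]
    by_cases hc1 : HT n A x = x
    · rw [if_pos hc1]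
      have hhx : ht P x = (x : ℤ) := by rw [ihx, hc1]
      exact ht_eq_all x hhx (x-1) (by omega)
    · rw [if_neg hc1]
      by_cases hc2 : x ∈ A ∧ 0 < HT n A x
      · rw [if_pos hc2]
        have hxP : x ∈ P := by
          by_contra hxp
          have hz := h2 (Finset.mem_sdiff.mpr ⟨hc2.1, hxp⟩)
          rw [mem_ZP] at hz
          omega
        have hs := ht_succ P (x-1)
        rw [show x-1+1 = x by omega, if_pos hxP] at hs
        omega
      · rw [if_neg hc2]
        have hxP : x ∉ P := by
          intro hxp
          by_cases hxA : x ∈ A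
          · have h3 : ¬ 0 < HT n A x := fun h => hc2 ⟨hxA, h⟩
            have hs := ht_succ P (x-1)
            rw [show x-1+1 = x by omega, if_pos hxp] at hs
            have hh := hPh (x-1) (by omega)
            omega
          · have hxIcc : x ∈ Finset.Icc 1 (statA P) := by
              by_contra hni
              exact hxA (h1 (Finset.mem_sdiff.mpr ⟨hxp, hni⟩))
            rw [Finset.mem_Icc] at hxIcc
            have hsub : Finset.Icc 1 x ⊆ P := by
              intro y hy
              refine statA_spec hPs hn ?_
              rw [Finset.mem_Icc] at hy ⊢
              omega
            have := ht_of_Icc_subset hsub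
            omega
        have hs := ht_succ P (x-1)
        rw [show x-1+1 = x by omega, if_neg hxP] at hs
        omega

lemma eq_pathOf (hn : 0 < n) (hP : IsDyck n P)
    (h1 : P \ Finset.Icc 1 (statA P) ⊆ A) (h2 : A \ P ⊆ ZP n P) :
    P = pathOf n A := by
  have key : ∀ x ≤ 2*n, ht P x = (HT n A x : ℤ) := by
    intro x hx
    have h := ht_eq_HT_of_interval hn hP h1 h2 (2*n - x) (by omega)
    rwa [show 2*n - (2*n - x) = x by omega] at h
  ext x
  rw [mem_pathOf]
  constructor
  · intro hxP
    have hxI := hP.1 hxP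
    rw [Finset.mem_Icc] at hxI
    refine ⟨hxI, ?_⟩
    have hs := ht_succ P (x-1)
    rw [show x-1+1 = x by omega, if_pos hxP] at hs
    have k1 := key x hxI.2
    have k2 := key (x-1) (by omega)
    omega
  · rintro ⟨⟨hxa, hxb⟩, hlt⟩
    by_contra hxP
    have hs := ht_succ P (x-1)
    rw [show x-1+1 = x by omega, if_neg hxP] at hs
    have k1 := key x hxb
    have k2 := key (x-1) (by omega)
    omega

lemma pathOf_spec1 (hn : 0 < n) :
    pathOf n A \ Finset.Icc 1 (statA (pathOf n A)) ⊆ A := by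
  intro x hx
  rw [Finset.mem_sdiff] at hx
  obtain ⟨hxp, hxn⟩ := hx
  by_contra hxA
  apply hxn
  obtain ⟨⟨hx1, hx2⟩, hlt⟩ := mem_pathOf.mp hxp
  have hstep := HT_step (n := n) (A := A) hx1 hx2
  have hle := HT_le (n := n) (A := A) hx2
  have hHx : HT n A x = x := by
    by_cases h : HT n A x = x
    · exact h
    · exfalso
      rw [if_neg h, if_neg (fun hc => hxA hc.1)] at hstep
      omega
  have hall := HT_eq_all (n := n) (A := A) x hx2 hHx
  have hsub : Finset.Icc 1 x ⊆ pathOf n A := by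
    intro y hy
    rw [Finset.mem_Icc] at hy
    rw [mem_pathOf]
    refine ⟨⟨hy.1, by omega⟩, ?_⟩
    rw [hall y hy.2, hall (y-1) (by omega)]
    omega
  rw [Finset.mem_Icc]
  exact ⟨hx1, le_statA pathOf_subset hn hsub⟩

lemma pathOf_spec2 (hn : 0 < n) (hA : A ⊆ Finset.Icc 1 (2*n)) :
    A \ pathOf n A ⊆ ZP n (pathOf n A) := by
  intro x hx
  rw [Finset.mem_sdiff] at hx
  obtain ⟨hxA, hxp⟩ := hx
  have hxi := hA hxA
  rw [Finset.mem_Icc] at hxi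
  rw [mem_ZP]
  refine ⟨hxi, ?_⟩
  have hnot : ¬ HT n A (x-1) < HT n A x := by
    intro hlt
    exact hxp (mem_pathOf.mpr ⟨hxi, hlt⟩)
  have hstep := HT_step (n := n) (A := A) hxi.1 hxi.2
  have hle := HT_le (n := n) (A := A) hxi.2
  have hHT0 : HT n A x = 0 := by
    by_cases h1 : HT n A x = x
    · rw [if_pos h1] at hstep; omega
    · rw [if_neg h1] at hstep
      by_cases h2 : x ∈ A ∧ 0 < HT n A x
      · rw [if_pos h2] at hstep; omega
      · have h3 : ¬ 0 < HT n A x := fun h => h2 ⟨hxA, h⟩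
        omega
  rw [ht_pathOf hxi.2, hHT0]
  simp

lemma isDyck_Icc : IsDyck n (Finset.Icc 1 n) := by
  refine ⟨?_, by simp, ?_⟩
  · intro y hy; rw [Finset.mem_Icc] at *; omega
  · intro x hx
    unfold ht
    have h1 : Finset.Icc 1 n ∩ Finset.Icc 1 x = Finset.Icc 1 (min n x) := by
      ext y; simp [Finset.mem_Icc]; omega
    rw [h1]
    have h2 : (Finset.Icc 1 (min n x)).card = min n x := by simp
    omega

lemma catalanRank_bdd :
    BddAbove {m : ℕ | ∃ B, IsDyck n B ∧ (A ∩ B).card = m} := by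
  refine ⟨n, fun m hm => ?_⟩
  obtain ⟨B, hB, rfl⟩ := hm
  calc (A ∩ B).card ≤ B.card := Finset.card_le_card Finset.inter_subset_right
  _ = n := hB.2.1

lemma le_catalanRank (hB : IsDyck n B) : (A ∩ B).card ≤ catalanRank n A :=
  le_csSup catalanRank_bdd ⟨B, hB, rfl⟩

lemma catalanRank_le (hm : ∀ B, IsDyck n B → (A ∩ B).card ≤ m) :
    catalanRank n A ≤ m := by
  refine csSup_le ⟨(A ∩ Finset.Icc 1 n).card, Finset.Icc 1 n, isDyck_Icc, rfl⟩ ?_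
  rintro m' ⟨B, hB, rfl⟩
  exact hm B hB

lemma catalanRank_full : catalanRank n (Finset.Icc 1 (2*n)) = n := by
  apply le_antisymm
  · apply catalanRank_le
    intro B hB
    rw [Finset.inter_eq_right.mpr hB.1, hB.2.1]
  · have h := le_catalanRank (A := Finset.Icc 1 (2*n)) (isDyck_Icc (n := n))
    have h2 : Finset.Icc 1 (2*n) ∩ Finset.Icc 1 n = Finset.Icc 1 n := by
      apply Finset.inter_eq_right.mpr
      intro y hy; rw [Finset.mem_Icc] at *; omega
    rw [h2] at h
    simpa using h

lemma card_inter_of_card (hPc : P.card = n) :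
    (A ∩ P).card = n - (P \ A).card := by
  have h : A ∩ P = P \ (P \ A) := by
    ext y; simp only [Finset.mem_inter, Finset.mem_sdiff]; tauto
  rw [h, Finset.card_sdiff_of_subset Finset.sdiff_subset, hPc]

lemma catalanRank_interval (hn : 0 < n) (hA : A ⊆ Finset.Icc 1 (2*n)) (hP : IsDyck n P)
    (h1 : P \ A ⊆ Finset.Icc 1 (statA P)) (h2 : A \ P ⊆ ZP n P) :
    catalanRank n A = n - (P \ A).card := by
  have hPs := hP.1
  have hPc := hP.2.1
  set s := (P \ A).card with hsdef
  have hsn : s ≤ n := by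
    rw [hsdef, ← hPc]
    exact Finset.card_le_card Finset.sdiff_subset
  have hlow : (A ∩ P).card = n - s := card_inter_of_card hPc
  have hge : n - s ≤ catalanRank n A := hlow ▸ le_catalanRank hP
  refine le_antisymm (catalanRank_le ?_) hge
  intro B hB
  by_cases hT : A \ P = ∅
  · have hAsub : A ⊆ P := Finset.sdiff_eq_empty_iff_subset.mp hT
    calc (A ∩ B).card ≤ A.card := Finset.card_le_card Finset.inter_subset_left
    _ = (A ∩ P).card := by rw [Finset.inter_eq_left.mpr hAsub]
    _ = n - s := hlow
  · obtain ⟨m, hm, hmin⟩ := Finset.exists_min_image (A \ P) id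
      (Finset.nonempty_iff_ne_empty.mpr hT)
    simp only [id] at hmin
    have hmz := h2 hm
    rw [mem_ZP] at hmz
    obtain ⟨⟨hm1, hm2⟩, hmht⟩ := hmz
    rw [Finset.mem_sdiff] at hm
    obtain ⟨hmA, hmP⟩ := hm
    -- 2 * c = m where c = |P ∩ [1, m-1]|
    set c := (P ∩ Finset.Icc 1 (m-1)).card with hc
    have hcs := card_succ P (m-1)
    rw [show m-1+1 = m by omega, if_neg hmP, add_zero] at hcs
    have hhtm : 2 * ((P ∩ Finset.Icc 1 m).card : ℤ) - m = 0 := hmht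
    have h2c : 2 * c = m := by omega
    -- statA P ≤ m - 1
    have hstat : statA P ≤ m - 1 := by
      by_contra h
      push_neg at h
      exact hmP (statA_spec hPs hn (by rw [Finset.mem_Icc]; omega))
    have hS : P \ A ⊆ P ∩ Finset.Icc 1 (m-1) := by
      intro y hy
      have hyI := h1 hy
      rw [Finset.mem_Icc] at hyI
      rw [Finset.mem_inter, Finset.mem_Icc]
      exact ⟨(Finset.mem_sdiff.mp hy).1, hyI.1, by omega⟩
    have hsc : s ≤ c := Finset.card_le_card hS
    have hAI : A ∩ Finset.Icc 1 (m-1) = (P ∩ Finset.Icc 1 (m-1)) \ (P \ A) := by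
      ext y
      simp only [Finset.mem_inter, Finset.mem_sdiff, Finset.mem_Icc]
      constructor
      · rintro ⟨hyA, hy1, hy2⟩
        have hyP : y ∈ P := by
          by_contra hyP
          have := hmin y (Finset.mem_sdiff.mpr ⟨hyA, hyP⟩)
          omega
        exact ⟨⟨hyP, hy1, hy2⟩, fun h => h.2 hyA⟩
      · rintro ⟨⟨hyP, hy1, hy2⟩, hnot⟩
        have hyA : y ∈ A := by
          by_contra h
          exact hnot ⟨hyP, h⟩
        exact ⟨hyA, hy1, hy2⟩
    have hAIc : (A ∩ Finset.Icc 1 (m-1)).card = c - s := by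
      rw [hAI, Finset.card_sdiff_of_subset hS]
    have hBb := hB.2.2 (m-1) (by omega)
    unfold ht at hBb
    set b := (B ∩ Finset.Icc 1 (m-1)).card with hb
    have hBc : m ≤ 2 * b := by omega
    have hBn : b ≤ n := by
      rw [hb, ← hB.2.1]
      exact Finset.card_le_card Finset.inter_subset_left
    have hsplit : (A ∩ B).card ≤ (A ∩ Finset.Icc 1 (m-1)).card + (B \ Finset.Icc 1 (m-1)).card := by
      refine le_trans (Finset.card_le_card ?_) (Finset.card_union_le _ _)
      intro y hy
      rw [Finset.mem_inter] at hy
      rw [Finset.mem_union, Finset.mem_inter, Finset.mem_sdiff]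
      by_cases hyI : y ∈ Finset.Icc 1 (m-1)
      · exact Or.inl ⟨hy.1, hyI⟩
      · exact Or.inr ⟨hy.2, hyI⟩
    have hBsd : (B \ Finset.Icc 1 (m-1)).card = n - b := by
      have h : B \ Finset.Icc 1 (m-1) = B \ (B ∩ Finset.Icc 1 (m-1)) := by
        ext y; simp only [Finset.mem_sdiff, Finset.mem_inter]; tauto
      rw [h, Finset.card_sdiff_of_subset Finset.inter_subset_left, hB.2.1]
    omega

lemma sum_pow_card (X : Finset ℕ) (r : MvPolynomial (Fin 2) ℤ) :
    ∑ S ∈ X.powerset, r ^ S.card = (r + 1) ^ X.card := by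
  classical
  induction X using Finset.induction_on with
  | empty => simp
  | @insert a s h ih =>
    rw [Finset.sum_powerset_insert h]
    have hc : ∀ t ∈ s.powerset, r ^ (insert a t).card = r * r ^ t.card := by
      intro t ht
      rw [Finset.card_insert_of_notMem (fun hc => h (Finset.mem_powerset.mp ht hc))]
      ring
    rw [Finset.sum_congr rfl hc, ← Finset.mul_sum, ih,
      Finset.card_insert_of_notMem h]
    ring

lemma ZP_card : (ZP n P).card = statB n P := rfl

end CatalanTutte

open CatalanTutte in
open scoped Classical in
/-- The Tutte polynomial of the Catalan matroid (in variables `q = X 0`, `t = X 1`)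
equals the generating function of Dyck paths of length `2n` by the statistics `a, b`. -/
theorem catalan_tutte (n : ℕ) (hn : 0 < n) :
    ∑ A ∈ (Finset.Icc 1 (2 * n)).powerset,
        (X 0 - 1 : MvPolynomial (Fin 2) ℤ) ^
            (catalanRank n (Finset.Icc 1 (2 * n)) - catalanRank n A) *
          (X 1 - 1) ^ (A.card - catalanRank n A) =
      ∑ P ∈ (Finset.Icc 1 (2 * n)).powerset.filter (IsDyck n),
        (X 0 : MvPolynomial (Fin 2) ℤ) ^ statA P * X 1 ^ statB n P := by
  rw [← Finset.sum_fiberwise_of_maps_to (g := pathOf n)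
      (t := (Finset.Icc 1 (2 * n)).powerset.filter (IsDyck n))
      (fun A _ => Finset.mem_filter.mpr
        ⟨Finset.mem_powerset.mpr pathOf_subset, pathOf_isDyck⟩)]
  apply Finset.sum_congr rfl
  intro P hP
  rw [Finset.mem_filter, Finset.mem_powerset] at hP
  obtain ⟨hPsub, hPD⟩ := hP
  have hSIcc : Finset.Icc 1 (statA P) ⊆ P := statA_spec hPsub hn
  have key : ∑ A ∈ (Finset.Icc 1 (2 * n)).powerset.filter (fun A => pathOf n A = P),
      ((X 0 - 1 : MvPolynomial (Fin 2) ℤ) ^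
          (catalanRank n (Finset.Icc 1 (2 * n)) - catalanRank n A) *
        (X 1 - 1) ^ (A.card - catalanRank n A))
      = ∑ p ∈ (Finset.Icc 1 (statA P)).powerset ×ˢ (ZP n P).powerset,
          ((X 0 - 1 : MvPolynomial (Fin 2) ℤ) ^ p.1.card * (X 1 - 1) ^ p.2.card) := by
    refine Finset.sum_nbij' (fun A => (P \ A, A \ P)) (fun p => (P \ p.1) ∪ p.2)
      ?_ ?_ ?_ ?_ ?_
    · -- hi
      intro A hA
      rw [Finset.mem_filter, Finset.mem_powerset] at hA
      obtain ⟨hA1, hA2⟩ := hA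
      have s1 := pathOf_spec1 (n := n) (A := A) hn
      have s2 := pathOf_spec2 (n := n) (A := A) hn hA1
      rw [hA2] at s1 s2
      rw [Finset.mem_product, Finset.mem_powerset, Finset.mem_powerset]
      constructor
      · intro y hy
        rw [Finset.mem_sdiff] at hy
        by_contra h
        exact hy.2 (s1 (Finset.mem_sdiff.mpr ⟨hy.1, h⟩))
      · exact s2
    · -- hj
      intro p hp
      rw [Finset.mem_product, Finset.mem_powerset, Finset.mem_powerset] at hp
      obtain ⟨hS, hT⟩ := hp
      rw [Finset.mem_filter, Finset.mem_powerset]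
      have hA1 : (P \ p.1) ∪ p.2 ⊆ Finset.Icc 1 (2 * n) :=
        Finset.union_subset (Finset.sdiff_subset.trans hPsub) (hT.trans ZP_subset)
      refine ⟨hA1, ?_⟩
      refine (eq_pathOf hn hPD ?_ ?_).symm
      · intro y hy
        rw [Finset.mem_sdiff] at hy
        rw [Finset.mem_union, Finset.mem_sdiff]
        exact Or.inl ⟨hy.1, fun h => hy.2 (hS h)⟩
      · intro y hy
        rw [Finset.mem_sdiff, Finset.mem_union, Finset.mem_sdiff] at hy
        rcases hy.1 with h | h
        · exact absurd h.1 hy.2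
        · exact hT h
    · -- left inverse
      intro A _
      ext y
      simp only [Finset.mem_union, Finset.mem_sdiff]
      tauto
    · -- right inverse
      intro p hp
      rw [Finset.mem_product, Finset.mem_powerset, Finset.mem_powerset] at hp
      obtain ⟨hS, hT⟩ := hp
      have hSP : ∀ y ∈ p.1, y ∈ P := fun y hy => hSIcc (hS hy)
      have hTP : ∀ y ∈ p.2, y ∉ P := fun y hy => ZP_notMem hPD (hT hy)
      have e1 : P \ ((P \ p.1) ∪ p.2) = p.1 := by
        ext y
        simp only [Finset.mem_sdiff, Finset.mem_union, not_or, not_and, not_not]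
        constructor
        · rintro ⟨hyP, h1, _⟩
          exact h1 hyP
        · intro hy
          exact ⟨hSP y hy, fun _ => hy, fun h => (hTP y h) (hSP y hy)⟩
      have e2 : ((P \ p.1) ∪ p.2) \ P = p.2 := by
        ext y
        simp only [Finset.mem_sdiff, Finset.mem_union]
        constructor
        · rintro ⟨h | h, hyP⟩
          · exact absurd h.1 hyP
          · exact h
        · intro hy
          exact ⟨Or.inr hy, hTP y hy⟩
      show (P \ (P \ p.1 ∪ p.2), (P \ p.1 ∪ p.2) \ P) = p
      rw [e1, e2]
    · -- summands
      intro A hA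
      rw [Finset.mem_filter, Finset.mem_powerset] at hA
      obtain ⟨hA1, hA2⟩ := hA
      have s1 := pathOf_spec1 (n := n) (A := A) hn
      have s2 := pathOf_spec2 (n := n) (A := A) hn hA1
      rw [hA2] at s1 s2
      have h1c : P \ A ⊆ Finset.Icc 1 (statA P) := by
        intro y hy
        rw [Finset.mem_sdiff] at hy
        by_contra h
        exact hy.2 (s1 (Finset.mem_sdiff.mpr ⟨hy.1, h⟩))
      have hrank := catalanRank_interval hn hA1 hPD h1c s2
      have hsn : (P \ A).card ≤ n := by
        rw [← hPD.2.1]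
        exact Finset.card_le_card Finset.sdiff_subset
      have hcardA : (A ∩ P).card + (A \ P).card = A.card :=
        Finset.card_inter_add_card_sdiff A P
      have hAP : (A ∩ P).card = n - (P \ A).card := card_inter_of_card hPD.2.1
      have e1 : catalanRank n (Finset.Icc 1 (2 * n)) - catalanRank n A = (P \ A).card := by
        rw [catalanRank_full, hrank]; omega
      have e2 : A.card - catalanRank n A = (A \ P).card := by
        rw [hrank]; omega
      rw [e1, e2]
  rw [key, Finset.sum_product]
  dsimp only
  rw [← Finset.sum_mul_sum, sum_pow_card, sum_pow_card,
    sub_add_cancel, sub_add_cancel, ZP_card]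
  congr 2
  simp
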